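/- arXiv:1511.02913 — 3 statements merged into one kernel-verified Lean document; each statement's English description precedes it below -/
import Mathlib

section
/- Let G be a strongly connected digraph with start vertex s. Two vertices x and y are 2-edge-connected in G if and only if r_x = r_y, h_x = h_y, r^R_x = r^R_y, and h^R_x = h^R_y, where r_x (resp., r^R_x) is the root of the tree containing x in the bridge decomposition of the dominator tree D (resp., D^R), and h_x (resp., h^R_x) is the nearest boundary ancestor of x in the loop nesting tree H (resp., H^R). -/
namespace StrongConn

variable {V : Type*}

/-- `p` is a walk in the digraph `G` from `u` to `v`, recorded as the list of visited vertices. -/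
def IsWalk (G : V → V → Prop) (u v : V) (p : List V) : Prop :=
  p.Chain' G ∧ p.head? = some u ∧ p.getLast? = some v

/-- The directed edge `(a,b)` occurs on the walk `p`. -/
def EdgeOn (a b : V) (p : List V) : Prop := (a, b) ∈ p.zip p.tail

/-- `v` is reachable from `u` in `G`. -/
def Reach (G : V → V → Prop) (u v : V) : Prop := ∃ p, IsWalk G u v p

/-- `u` and `v` are strongly connected in `G`. -/
def SConn (G : V → V → Prop) (u v : V) : Prop := Reach G u v ∧ Reach G v u

def StronglyConnected (G : V → V → Prop) : Prop := ∀ u v, Reach G u v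

/-- `G` with the edge `(a,b)` deleted. -/
def DelEdge (G : V → V → Prop) (a b : V) : V → V → Prop :=
  fun x y => G x y ∧ ¬(x = a ∧ y = b)

/-- `G` with the vertex `u` (and all incident edges) deleted. -/
def DelVertex (G : V → V → Prop) (u : V) : V → V → Prop :=
  fun x y => G x y ∧ x ≠ u ∧ y ≠ u

/-- `C` is a strongly connected component of `G`. -/
def IsSCC (G : V → V → Prop) (C : Set V) : Prop :=
  C.Nonempty ∧ (∀ x ∈ C, ∀ y ∈ C, SConn G x y) ∧ ∀ x ∈ C, ∀ y, SConn G x y → y ∈ C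

/-- `(a,b)` is a strong bridge: an edge whose removal increases the number of
strongly connected components, i.e. it separates some strongly connected pair. -/
def IsStrongBridge (G : V → V → Prop) (a b : V) : Prop :=
  G a b ∧ ∃ x y, SConn G x y ∧ ¬ SConn (DelEdge G a b) x y

/-- `u` is a strong articulation point: removing it increases the number of strongly
connected components, i.e. it separates some strongly connected pair of other vertices. -/
def IsStrongArticulationPoint (G : V → V → Prop) (u : V) : Prop :=
  ∃ x y, x ≠ u ∧ y ≠ u ∧ SConn G x y ∧ ¬ SConn (DelVertex G u) x y

/-- The reverse digraph. -/
def Rev (G : V → V → Prop) : V → V → Prop := fun x y => G y x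

/-- `u` dominates `v` in the flow graph `G_s`; equivalently, `u` is an ancestor of `v`
(and `v` a descendant of `u`) in the dominator tree of `G_s`. -/
def Dom (G : V → V → Prop) (s u v : V) : Prop :=
  ∀ p, IsWalk G s v p → u ∈ p

/-- `u` is the immediate dominator of `v` in `G_s` (the parent of `v` in the dominator tree). -/
def Idom (G : V → V → Prop) (s u v : V) : Prop :=
  u ≠ v ∧ Dom G s u v ∧ ∀ w, w ≠ v → Dom G s w v → Dom G s w u

/-- Edge `(a,b)` is a bridge of the flow graph `G_s`: every walk from `s` to `b` uses it. -/
def IsBridge (G : V → V → Prop) (s a b : V) : Prop :=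
  G a b ∧ ∀ p, IsWalk G s b p → EdgeOn a b p

/-- `r` is the head of some bridge of `G_s`, i.e. a non-`s` root in the bridge
decomposition of the dominator tree. -/
def IsBridgeHead (G : V → V → Prop) (s r : V) : Prop :=
  ∃ a, IsBridge G s a r

/-- `r` is the root of the tree containing `x` in the bridge decomposition of the
dominator tree of `G_s`: `r` dominates `x`, `r` is `s` or a bridge head, and every
bridge head dominating `x` dominates `r`. -/
def IsBDRoot (G : V → V → Prop) (s r x : V) : Prop :=
  Dom G s r x ∧ (r = s ∨ IsBridgeHead G s r) ∧
    ∀ z, Dom G s z x → IsBridgeHead G s z → Dom G s z r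

/-- A depth-first search tree of `G` rooted at `s`, given by a parent function and a
preorder numbering. -/
structure DFSTree (G : V → V → Prop) (s : V) where
  parent : V → V
  pre : V → ℕ
  parent_root : parent s = s
  parent_edge : ∀ v, v ≠ s → G (parent v) v
  root_reach : ∀ v, ∃ n, parent^[n] v = s
  pre_inj : Function.Injective pre
  pre_parent : ∀ v, v ≠ s → pre (parent v) < pre v
  /-- Descendants of a vertex form a contiguous interval in preorder. -/
  interval : ∀ u v w, (∃ n, parent^[n] w = u) → pre u ≤ pre v → pre v ≤ pre w →
      ∃ n, parent^[n] v = u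
  /-- The defining property of depth-first search trees: every edge going forward
  in preorder goes to a descendant. -/
  dfs_edge : ∀ u v, G u v → pre u < pre v → ∃ n, parent^[n] v = u

/-- `u` is an ancestor of `v` in the tree `T` (every vertex is an ancestor of itself). -/
def DFSTree.Anc {G : V → V → Prop} {s : V} (T : DFSTree G s) (u v : V) : Prop :=
  ∃ n, T.parent^[n] v = u

/-- `x ∈ loop(u)` with respect to the tree-ancestor relation `tanc`: `x` is a descendant
of `u` and there is a walk from `x` to `u` using only descendants of `u`. -/
def InLoop (G : V → V → Prop) (tanc : V → V → Prop) (u x : V) : Prop :=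
  tanc u x ∧ ∃ p, IsWalk G x u p ∧ ∀ y ∈ p, tanc u y

/-- `hp` is the parent function of the loop nesting tree of `G_s` with respect to the
DFS-tree ancestor relation `tanc`: `hp x` is the nearest proper ancestor `u` of `x`
in the DFS tree with `x ∈ loop(u)`. -/
def IsLoopParent (G : V → V → Prop) (s : V) (tanc : V → V → Prop) (hp : V → V) : Prop :=
  hp s = s ∧ ∀ x, x ≠ s →
    (tanc (hp x) x ∧ hp x ≠ x ∧ InLoop G tanc (hp x) x ∧
      ∀ u, tanc u x → u ≠ x → InLoop G tanc u x → tanc u (hp x))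

/-- `u` is an ancestor of `v` in the loop nesting tree with parent function `hp`. -/
def HAnc (hp : V → V) (u v : V) : Prop := ∃ n, hp^[n] v = u

/-- `w` is the nearest common ancestor of `x` and `y` in the loop nesting tree
with parent function `hp`. -/
def HNca (hp : V → V) (x y w : V) : Prop :=
  HAnc hp w x ∧ HAnc hp w y ∧ ∀ z, HAnc hp z x → HAnc hp z y → HAnc hp z w

/-- `u` is a nontrivial dominator of `G_s`: `u ≠ s` and `u` is not a leaf of the
dominator tree (it properly dominates some vertex). -/
def NontrivialDom (G : V → V → Prop) (s u : V) : Prop :=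
  u ≠ s ∧ ∃ w, w ≠ u ∧ Dom G s u w

/-- `a` and `b` are siblings in the dominator tree of `G_s`. -/
def SiblingInD (G : V → V → Prop) (s a b : V) : Prop :=
  a ≠ b ∧ ∃ w, Idom G s w a ∧ Idom G s w b

/-- Given the bridge-decomposition root function `r` and loop-nesting parent `hp`,
`z` is a boundary vertex. -/
def Boundary (s : V) (r hp : V → V) (z : V) : Prop := z = s ∨ r (hp z) ≠ r z

/-- `z` is the nearest boundary ancestor of `x` in the loop nesting tree. -/
def IsNearestBoundary (s : V) (r hp : V → V) (x z : V) : Prop :=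
  HAnc hp z x ∧ Boundary s r hp z ∧
    ∀ z', HAnc hp z' x → Boundary s r hp z' → HAnc hp z' z

/-- `x` and `y` are 2-edge-connected: no single edge deletion leaves them in
different strongly connected components. -/
def TwoEdgeConnected (G : V → V → Prop) (x y : V) : Prop :=
  ∀ a b, G a b → SConn (DelEdge G a b) x y


/-! ### Auxiliary walk machinery -/

/-- Inductive characterization of walks. -/
inductive Walk (G : V → V → Prop) : V → V → List V → Prop
  | single (v : V) : Walk G v v [v]
  | cons {u w v : V} {p : List V} : G u w → Walk G w v p → Walk G u v (u :: p)

theorem Walk.ne_nil {G : V → V → Prop} {u v : V} {p : List V} (h : Walk G u v p) : p ≠ [] := by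
  cases h <;> simp

theorem Walk.head_mem {G : V → V → Prop} {u v : V} {p : List V} (h : Walk G u v p) : u ∈ p := by
  cases h <;> simp

theorem Walk.last_mem {G : V → V → Prop} {u v : V} {p : List V} (h : Walk G u v p) : v ∈ p := by
  induction h with
  | single => simp
  | cons _ _ ih => simp [ih]

theorem Walk.head?_eq {G : V → V → Prop} {u v : V} {p : List V} (h : Walk G u v p) :
    p.head? = some u := by cases h <;> simp

theorem Walk.getLast?_eq {G : V → V → Prop} {u v : V} {p : List V} (h : Walk G u v p) :
    p.getLast? = some v := by
  induction h with
  | single => simp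
  | @cons u w v p hg h ih =>
      cases p with
      | nil => exact absurd rfl h.ne_nil
      | cons c t => rw [List.getLast?_cons_cons]; exact ih

theorem isWalk_iff_walk {G : V → V → Prop} {u v : V} {p : List V} :
    IsWalk G u v p ↔ Walk G u v p := by
  constructor
  · rintro ⟨hc, hh, hl⟩
    induction p generalizing u with
    | nil => simp at hh
    | cons a q ih =>
      simp at hh; subst hh
      cases q with
      | nil =>
        simp at hl; subst hl; exact Walk.single _
      | cons b t =>
        replace hc := List.isChain_cons_cons.1 hc
        rw [List.getLast?_cons_cons] at hl
        exact Walk.cons hc.1 (ih hc.2 rfl hl)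
  · intro h
    refine ⟨?_, h.head?_eq, h.getLast?_eq⟩
    induction h with
    | single => exact List.isChain_singleton _
    | cons hg h ih =>
      cases h with
      | single => exact List.isChain_cons_cons.2 ⟨hg, List.isChain_singleton _⟩
      | cons hg' h' => exact List.isChain_cons_cons.2 ⟨hg, ih⟩

theorem Walk.imp {G G' : V → V → Prop} (h : ∀ a b, G a b → G' a b) {u v : V} {p : List V}
    (hw : Walk G u v p) : Walk G' u v p := by
  induction hw with
  | single => exact Walk.single _
  | cons hg _ ih => exact Walk.cons (h _ _ hg) ih

theorem Walk.imp_mem {G G' : V → V → Prop} {u v : V} {p : List V}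
    (hw : Walk G u v p) (h : ∀ a b, a ∈ p → b ∈ p → G a b → G' a b) : Walk G' u v p := by
  induction hw with
  | single => exact Walk.single _
  | @cons u w v p hg hw' ih =>
      exact Walk.cons (h _ _ (by simp) (by simp [hw'.head_mem]) hg)
        (ih fun a b ha hb => h a b (by simp [ha]) (by simp [hb]))

theorem Walk.snoc {G : V → V → Prop} {u v w : V} {p : List V}
    (h : Walk G u v p) (hg : G v w) : Walk G u w (p ++ [w]) := by
  induction h with
  | single v => exact Walk.cons hg (Walk.single _)
  | cons hg' _ ih => exact Walk.cons hg' (ih hg)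

theorem Walk.trans {G : V → V → Prop} {u v w : V} {p q : List V}
    (h : Walk G u v p) (h' : Walk G v w q) : Walk G u w (p.dropLast ++ q) := by
  induction h with
  | single => simpa using h'
  | @cons u x v p hg hw ih =>
      rw [List.dropLast_cons_of_ne_nil hw.ne_nil]
      exact Walk.cons hg (ih h')

theorem Walk.eq_dropLast_concat {G : V → V → Prop} {u v : V} {p : List V}
    (h : Walk G u v p) : p = p.dropLast ++ [v] := by
  induction h with
  | single => simp
  | @cons u x v p hg hw ih =>
      rw [List.dropLast_cons_of_ne_nil hw.ne_nil]
      simpa using ih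

theorem mem_trans_left {G : V → V → Prop} {u v w z : V} {p q : List V}
    (h : Walk G u v p) (h' : Walk G v w q) (hz : z ∈ p) : z ∈ p.dropLast ++ q := by
  rw [h.eq_dropLast_concat] at hz
  rcases List.mem_append.1 hz with h1 | h1
  · exact List.mem_append.2 (Or.inl h1)
  · simp at h1; subst h1; exact List.mem_append.2 (Or.inr h'.head_mem)

theorem mem_trans_subset {z : V} {p q : List V} (hz : z ∈ p.dropLast ++ q) :
    z ∈ p ∨ z ∈ q := by
  rcases List.mem_append.1 hz with h1 | h1
  · exact Or.inl ((List.dropLast_sublist _).subset h1)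
  · exact Or.inr h1

theorem Walk.reverse {G : V → V → Prop} {u v : V} {p : List V}
    (h : Walk G u v p) : Walk (Rev G) v u p.reverse := by
  induction h with
  | single => simpa using Walk.single _
  | @cons u x v p hg hw ih =>
      simp only [List.reverse_cons]
      exact ih.snoc hg

/-! ### EdgeOn lemmas -/

theorem edgeOn_iff {a b : V} {p : List V} :
    EdgeOn a b p ↔ ∃ l1 l2, p = l1 ++ a :: b :: l2 := by
  induction p with
  | nil => simp [EdgeOn]
  | cons x q ih =>
    cases q with
    | nil =>
      simp only [EdgeOn, List.zip_nil_right, List.tail_cons]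
      constructor
      · simp
      · rintro ⟨l1, l2, h⟩
        rcases l1 with _ | ⟨c, l1⟩ <;> simp_all
    | cons y t =>
      simp only [EdgeOn, List.tail_cons, List.zip_cons_cons, List.mem_cons] at *
      constructor
      · rintro (h | h)
        · refine ⟨[], t, ?_⟩; simp at h; simp [h.1, h.2]
        · rcases ih.1 h with ⟨l1, l2, hl⟩
          exact ⟨x :: l1, l2, by simp [hl]⟩
      · rintro ⟨l1, l2, hl⟩
        rcases l1 with _ | ⟨c, l1⟩
        · simp at hl; left; simp [hl.1, hl.2.1]
        · simp at hl
          right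
          exact ih.2 ⟨l1, l2, by simp [hl.2]⟩

theorem EdgeOn.left_mem {a b : V} {p : List V} (h : EdgeOn a b p) : a ∈ p := by
  rcases edgeOn_iff.1 h with ⟨l1, l2, rfl⟩; simp

theorem EdgeOn.right_mem {a b : V} {p : List V} (h : EdgeOn a b p) : b ∈ p := by
  rcases edgeOn_iff.1 h with ⟨l1, l2, rfl⟩; simp

theorem EdgeOn.append_right {a b : V} {p : List V} (h : EdgeOn a b p) (m : List V) :
    EdgeOn a b (p ++ m) := by
  rcases edgeOn_iff.1 h with ⟨l1, l2, rfl⟩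
  exact edgeOn_iff.2 ⟨l1, l2 ++ m, by simp⟩

theorem EdgeOn.cons {a b x : V} {p : List V} (h : EdgeOn a b p) : EdgeOn a b (x :: p) := by
  rcases edgeOn_iff.1 h with ⟨l1, l2, rfl⟩
  exact edgeOn_iff.2 ⟨x :: l1, l2, by simp⟩

theorem edgeOn_cons_iff {a b x : V} {p : List V} :
    EdgeOn a b (x :: p) ↔ (x = a ∧ p.head? = some b) ∨ EdgeOn a b p := by
  constructor
  · intro h
    rcases edgeOn_iff.1 h with ⟨l1, l2, hl⟩
    rcases l1 with _ | ⟨c, l1⟩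
    · simp at hl; exact Or.inl ⟨hl.1, by simp [hl.2]⟩
    · simp at hl; exact Or.inr (edgeOn_iff.2 ⟨l1, l2, hl.2⟩)
  · rintro (⟨rfl, hh⟩ | h)
    · rcases p with _ | ⟨c, t⟩
      · simp at hh
      · simp at hh; subst hh; exact edgeOn_iff.2 ⟨[], t, rfl⟩
    · exact h.cons

theorem edgeOn_append_split {a b : V} {l m : List V} (h : EdgeOn a b (l ++ m)) :
    EdgeOn a b l ∨ EdgeOn a b m ∨ (l.getLast? = some a ∧ m.head? = some b) := by
  induction l with
  | nil => simp at h; exact Or.inr (Or.inl h)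
  | cons c l' ih =>
    rw [List.cons_append, edgeOn_cons_iff] at h
    rcases h with ⟨rfl, hh⟩ | h
    · rcases l' with _ | ⟨d, t⟩
      · simp at hh
        exact Or.inr (Or.inr ⟨rfl, hh⟩)
      · simp at hh; subst hh
        exact Or.inl (edgeOn_iff.2 ⟨[], t, rfl⟩)
    · rcases ih h with h1 | h1 | h1
      · exact Or.inl h1.cons
      · exact Or.inr (Or.inl h1)
      · refine Or.inr (Or.inr ⟨?_, h1.2⟩)
        rcases l' with _ | ⟨d, t⟩
        · simp at h1
        · rw [List.getLast?_cons_cons]; exact h1.1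

theorem chain'_extract {R : V → V → Prop} {a b : V} {l1 l2 : List V}
    (h : List.Chain' R (l1 ++ a :: b :: l2)) : R a b := by
  induction l1 with
  | nil => exact (List.isChain_cons_cons.1 h).1
  | cons c t ih => exact ih (List.IsChain.tail h)

/-! ### Reach and SConn lemmas -/

theorem reach_iff_walk {G : V → V → Prop} {u v : V} : Reach G u v ↔ ∃ p, Walk G u v p :=
  exists_congr fun _ => isWalk_iff_walk

theorem reach_self (G : V → V → Prop) (v : V) : Reach G v v :=
  reach_iff_walk.2 ⟨[v], Walk.single v⟩

theorem Reach.trans' {G : V → V → Prop} {u v w : V} (h : Reach G u v) (h' : Reach G v w) :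
    Reach G u w := by
  rcases reach_iff_walk.1 h with ⟨p, hp⟩
  rcases reach_iff_walk.1 h' with ⟨q, hq⟩
  exact reach_iff_walk.2 ⟨_, hp.trans hq⟩

theorem reach_imp {G G' : V → V → Prop} (h : ∀ a b, G a b → G' a b) {u v : V} :
    Reach G u v → Reach G' u v := by
  intro hr; rcases reach_iff_walk.1 hr with ⟨p, hp⟩
  exact reach_iff_walk.2 ⟨p, hp.imp h⟩

theorem reach_rev_iff {G : V → V → Prop} {u v : V} : Reach (Rev G) u v ↔ Reach G v u := by
  constructor
  · intro hr; rcases reach_iff_walk.1 hr with ⟨p, hp⟩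
    exact reach_iff_walk.2 ⟨p.reverse, hp.reverse.imp fun a b h => h⟩
  · intro hr; rcases reach_iff_walk.1 hr with ⟨p, hp⟩
    exact reach_iff_walk.2 ⟨p.reverse, hp.reverse⟩

theorem SConn.symm' {G : V → V → Prop} {u v : V} (h : SConn G u v) : SConn G v u := ⟨h.2, h.1⟩

theorem sconn_imp {G G' : V → V → Prop} (h : ∀ a b, G a b → G' a b) {u v : V} :
    SConn G u v → SConn G' u v := fun hs => ⟨reach_imp h hs.1, reach_imp h hs.2⟩

theorem sconn_rev_iff {G : V → V → Prop} {u v : V} : SConn (Rev G) u v ↔ SConn G u v := by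
  unfold SConn; rw [reach_rev_iff, reach_rev_iff]; exact and_comm

/-! ### Splitting walks -/

theorem Walk.split_first {G : V → V → Prop} {u v c : V} {p : List V} (h : Walk G u v p) :
    c ∈ p → ∃ p1 p2, p = p1 ++ c :: p2 ∧ Walk G u c (p1 ++ [c]) ∧ Walk G c v (c :: p2) ∧
      c ∉ p1 := by
  induction h with
  | single w =>
      intro hc
      simp at hc; subst hc
      exact ⟨[], [], rfl, Walk.single _, Walk.single _, by simp⟩
  | @cons u w v p hg hw ih =>
      intro hc
      by_cases hu : c = u
      · subst hu
        exact ⟨[], p, rfl, Walk.single _, Walk.cons hg hw, by simp⟩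
      · have hc' : c ∈ p := by
          rcases List.mem_cons.1 hc with h1 | h1
          · exact absurd h1 hu
          · exact h1
        obtain ⟨p1, p2, hpe, hw1, hw2, hnm⟩ := ih hc'
        refine ⟨u :: p1, p2, by simp [hpe], Walk.cons hg hw1, hw2, ?_⟩
        simp only [List.mem_cons, not_or]
        exact ⟨hu, hnm⟩

theorem subset_of_concat_eq {q1 q2 p1 : List V} {x v : V}
    (h : q1 ++ x :: q2 = p1 ++ [v]) : q1 ⊆ p1 := by
  have hlen : q1.length ≤ p1.length := by
    have := congrArg List.length h; simp at this; omega
  have h1 : (q1 ++ x :: q2).take q1.length = q1 := List.take_left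
  rw [h, List.take_append_of_le_length hlen] at h1
  intro z hz
  rw [← h1] at hz
  exact List.take_subset _ _ hz

/-! ### Dominator lemmas -/

theorem dom_iff_walk {G : V → V → Prop} {s u v : V} :
    Dom G s u v ↔ ∀ p, Walk G s v p → u ∈ p :=
  forall_congr' fun _ => by rw [isWalk_iff_walk]

theorem dom_refl (G : V → V → Prop) (s v : V) : Dom G s v v :=
  dom_iff_walk.2 fun _ hp => hp.last_mem

theorem not_dom_iff {G : V → V → Prop} {s u v : V} :
    ¬ Dom G s u v ↔ ∃ p, Walk G s v p ∧ u ∉ p := by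
  rw [dom_iff_walk]; push_neg; rfl

theorem dom_s_self (G : V → V → Prop) (s v : V) : Dom G s s v :=
  dom_iff_walk.2 fun _ hp => hp.head_mem

theorem eq_s_of_dom_s {G : V → V → Prop} {s z : V} (h : Dom G s z s) : z = s := by
  have := dom_iff_walk.1 h [s] (Walk.single s)
  simpa using this

theorem Dom.trans {G : V → V → Prop} {s a b c : V} (h1 : Dom G s a b) (h2 : Dom G s b c) :
    Dom G s a c := by
  rw [dom_iff_walk] at *
  intro p hp
  obtain ⟨p1, p2, hpe, hw1, _, _⟩ := hp.split_first (h2 p hp)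
  have ha : a ∈ p1 ++ [b] := h1 _ hw1
  rw [hpe]
  rcases List.mem_append.1 ha with h3 | h3
  · exact List.mem_append.2 (Or.inl h3)
  · simp at h3; subst h3; simp

theorem Dom.antisymm {G : V → V → Prop} {s u v : V} (hu : Dom G s u v) (hv : Dom G s v u)
    (hr : Reach G s v) : u = v := by
  rcases reach_iff_walk.1 hr with ⟨p, hp⟩
  obtain ⟨p1, p2, hpe, hw1, _, hnm⟩ := hp.split_first (hp.last_mem)
  have hu1 : u ∈ p1 ++ [v] := dom_iff_walk.1 hu _ hw1
  rcases List.mem_append.1 hu1 with h1 | h1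
  · obtain ⟨q1, q2, hqe, hw2, _, _⟩ := hw1.split_first (List.mem_append.2 (Or.inl h1))
    have hv2 : v ∈ q1 ++ [u] := dom_iff_walk.1 hv _ hw2
    rcases List.mem_append.1 hv2 with h2 | h2
    · exact absurd (subset_of_concat_eq hqe.symm h2) hnm
    · simp at h2; exact h2.symm
  · simpa using h1

/-! ### DelEdge walk lemmas -/

theorem Walk.of_del {G : V → V → Prop} {a b u v : V} {p : List V}
    (h : Walk (DelEdge G a b) u v p) : Walk G u v p := h.imp fun _ _ hg => hg.1

theorem walk_delEdge_of_not_mem {G : V → V → Prop} {a b u v : V} {p : List V}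
    (hw : Walk G u v p) (hb : b ∉ p) : Walk (DelEdge G a b) u v p :=
  hw.imp_mem fun _ y _ hy hg => ⟨hg, fun hab => hb (hab.2 ▸ hy)⟩

theorem walk_delEdge_of_not_edgeOn {G : V → V → Prop} {a b u v : V} {p : List V}
    (hw : Walk G u v p) (he : ¬ EdgeOn a b p) : Walk (DelEdge G a b) u v p := by
  induction hw with
  | single v => exact Walk.single v
  | @cons u w v p hg hw' ih =>
      refine Walk.cons ⟨hg, ?_⟩ (ih ?_)
      · rintro ⟨rfl, rfl⟩
        exact he (edgeOn_cons_iff.2 (Or.inl ⟨rfl, hw'.head?_eq⟩))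
      · intro h; exact he h.cons

/-! ### Bridge lemmas -/

theorem IsBridge.edgeOn_of_walk {G : V → V → Prop} {s a b : V} {p : List V}
    (hb : IsBridge G s a b) (hw : Walk G s b p) : EdgeOn a b p :=
  hb.2 p (isWalk_iff_walk.2 hw)

theorem IsBridge.dom_tail {G : V → V → Prop} {s a b : V} (hb : IsBridge G s a b) :
    Dom G s a b :=
  dom_iff_walk.2 fun _ hp => (hb.edgeOn_of_walk hp).left_mem

theorem IsBridge.head_ne_s {G : V → V → Prop} {s a b : V} (hb : IsBridge G s a b) :
    b ≠ s := by
  intro hbs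
  subst hbs
  have := hb.edgeOn_of_walk (Walk.single b)
  simp [EdgeOn] at this

theorem IsBridge.tail_ne_head {G : V → V → Prop} {s a b : V} (hb : IsBridge G s a b)
    (hr : Reach G s b) : a ≠ b := by
  classical
  intro hab
  subst hab
  rcases reach_iff_walk.1 hr with ⟨p, hp⟩
  obtain ⟨p1, p2, _, hw1, _, hnm⟩ := hp.split_first hp.last_mem
  have he := hb.edgeOn_of_walk hw1
  rcases edgeOn_iff.1 he with ⟨l1, l2, hl⟩
  have hcount : (p1 ++ [a]).count a = 1 := by
    rw [List.count_append]
    simp [List.count_eq_zero.2 hnm]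
  rw [hl, List.count_append] at hcount
  simp [List.count_cons] at hcount
  omega

theorem Reach.of_dom {G : V → V → Prop} {s u v : V} (hd : Dom G s u v) (hr : Reach G s v) :
    Reach G s u := by
  rcases reach_iff_walk.1 hr with ⟨p, hp⟩
  obtain ⟨p1, p2, _, hw1, _, _⟩ := hp.split_first (dom_iff_walk.1 hd p hp)
  exact reach_iff_walk.2 ⟨_, hw1⟩

theorem IsBridge.not_dom_head_tail {G : V → V → Prop} {s a b : V} (hb : IsBridge G s a b)
    (hr : Reach G s b) : ¬ Dom G s b a := by
  intro hd
  exact hb.tail_ne_head hr (Dom.antisymm hb.dom_tail hd hr)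

theorem s_not_dom_head {G : V → V → Prop} {s a b v : V} (hb : IsBridge G s a b)
    (hd : Dom G s b v) : v ≠ s := by
  rintro rfl
  exact hb.head_ne_s (eq_s_of_dom_s hd)

theorem no_del_reach_of_dom {G : V → V → Prop} {s a b v : V} (hb : IsBridge G s a b)
    (hd : Dom G s b v) : ¬ Reach (DelEdge G a b) s v := by
  intro hr
  rcases reach_iff_walk.1 hr with ⟨p, hp⟩
  have hpg : Walk G s v p := hp.of_del
  obtain ⟨p1, p2, hpe, hw1, _, _⟩ := hpg.split_first (dom_iff_walk.1 hd p hpg)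
  have he : EdgeOn a b (p1 ++ [b]) := hb.edgeOn_of_walk hw1
  have he' : EdgeOn a b p := by
    have := he.append_right p2
    rwa [List.append_assoc, List.singleton_append, ← hpe] at this
  rcases edgeOn_iff.1 he' with ⟨l1, l2, hl⟩
  have hchain : List.Chain' (DelEdge G a b) p := (isWalk_iff_walk.2 hp).1
  rw [hl] at hchain
  exact (chain'_extract hchain).2 ⟨rfl, rfl⟩

theorem reach_del_of_not_dom {G : V → V → Prop} {s a b v : V} (hd : ¬ Dom G s b v) :
    Reach (DelEdge G a b) s v := by
  rcases not_dom_iff.1 hd with ⟨p, hp, hnm⟩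
  exact reach_iff_walk.2 ⟨p, walk_delEdge_of_not_mem hp hnm⟩

/-! ### DFS tree lemmas -/

namespace DFSTree

variable {G : V → V → Prop} {s : V} (T : DFSTree G s)

theorem anc_refl (v : V) : T.Anc v v := ⟨0, rfl⟩

theorem parent_iterate_s (n : ℕ) : T.parent^[n] s = s := by
  induction n with
  | zero => rfl
  | succ n ih => rw [Function.iterate_succ_apply', ih, T.parent_root]

theorem anc_trans {u v w : V} (h1 : T.Anc u v) (h2 : T.Anc v w) : T.Anc u w := by
  obtain ⟨n, hn⟩ := h1; obtain ⟨m, hm⟩ := h2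
  exact ⟨n + m, by rw [Function.iterate_add_apply, hm, hn]⟩

theorem pre_iterate_le (n : ℕ) (v : V) : T.pre (T.parent^[n] v) ≤ T.pre v := by
  induction n generalizing v with
  | zero => exact le_refl _
  | succ n ih =>
      rw [Function.iterate_succ_apply]
      refine le_trans (ih (T.parent v)) ?_
      by_cases hv : v = s
      · subst hv; rw [T.parent_root]
      · exact le_of_lt (T.pre_parent v hv)

theorem pre_le_of_anc {u v : V} (h : T.Anc u v) : T.pre u ≤ T.pre v := by
  obtain ⟨n, hn⟩ := h; rw [← hn]; exact T.pre_iterate_le n v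

theorem anc_antisymm {u v : V} (h1 : T.Anc u v) (h2 : T.Anc v u) : u = v :=
  T.pre_inj (le_antisymm (T.pre_le_of_anc h1) (T.pre_le_of_anc h2))

theorem pre_lt_of_anc {u v : V} (h : T.Anc u v) (hne : u ≠ v) : T.pre u < T.pre v :=
  lt_of_le_of_ne (T.pre_le_of_anc h) fun he => hne (T.pre_inj he)

theorem anc_s (v : V) : T.Anc s v := T.root_reach v

theorem anc_comparable {u v w : V} (h1 : T.Anc u w) (h2 : T.Anc v w) :
    T.Anc u v ∨ T.Anc v u := by
  obtain ⟨n, hn⟩ := h1; obtain ⟨m, hm⟩ := h2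
  rcases le_total n m with h | h
  · right
    refine ⟨m - n, ?_⟩
    rw [← hn, ← Function.iterate_add_apply]
    rw [Nat.sub_add_cancel h, hm]
  · left
    refine ⟨n - m, ?_⟩
    rw [← hm, ← Function.iterate_add_apply]
    rw [Nat.sub_add_cancel h, hn]

theorem parent_anc (v : V) : T.Anc (T.parent v) v := ⟨1, rfl⟩

theorem exists_tree_walk {z x : V} (h : T.Anc z x) :
    ∃ p, Walk G z x p ∧ ∀ v ∈ p, T.Anc z v ∧ T.Anc v x := by
  obtain ⟨n, hn⟩ := h
  induction n generalizing x with
  | zero =>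
      simp only [Function.iterate_zero, id] at hn
      subst hn
      exact ⟨[x], Walk.single x, by simp [T.anc_refl]⟩
  | succ n ih =>
      by_cases hzx : z = x
      · subst hzx
        exact ⟨[z], Walk.single z, by simp [T.anc_refl]⟩
      · have hxs : x ≠ s := by
          rintro rfl
          exact hzx (by rw [← hn, T.parent_iterate_s])
        rw [Function.iterate_succ_apply] at hn
        obtain ⟨p, hw, hm⟩ := ih hn
        refine ⟨p ++ [x], hw.snoc (T.parent_edge x hxs), ?_⟩
        intro v hv
        rcases List.mem_append.1 hv with h1 | h1
        · exact ⟨(hm v h1).1, T.anc_trans (hm v h1).2 (T.parent_anc x)⟩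
        · simp at h1; subst h1
          exact ⟨⟨n+1, by rw [Function.iterate_succ_apply]; exact hn⟩, T.anc_refl _⟩

theorem anc_of_dom {u v : V} (h : Dom G s u v) : T.Anc u v := by
  obtain ⟨p, hw, hm⟩ := T.exists_tree_walk (T.anc_s v)
  exact (hm u (dom_iff_walk.1 h p hw)).2

/-- The DFS descending lemma: a walk all of whose vertices have preorder number at least
that of `c`, starting at a descendant of `c`, stays among descendants of `c`. -/
theorem descend {u d c : V} {p : List V} (hw : Walk G u d p) :
    T.Anc c u → (∀ v ∈ p, T.pre c ≤ T.pre v) → ∀ v ∈ p, T.Anc c v := by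
  induction hw with
  | single v =>
      intro hc _ z hz; simp at hz; subst hz; exact hc
  | @cons u w v p hg hw ih =>
      intro hc hpre
      have hcw : T.Anc c w := by
        rcases lt_or_ge (T.pre u) (T.pre w) with h | h
        · exact T.anc_trans hc (T.dfs_edge u w hg h)
        · exact T.interval c w u hc (hpre w (by simp [hw.head_mem])) h
      intro z hz
      rcases List.mem_cons.1 hz with h1 | h1
      · exact h1 ▸ hc
      · exact ih hcw (fun v hv => hpre v (by simp [hv])) z h1

end DFSTree

theorem exists_min_pre (f : V → ℕ) : ∀ l : List V, l ≠ [] → ∃ c ∈ l, ∀ v ∈ l, f c ≤ f v := by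
  intro l
  induction l with
  | nil => intro h; exact absurd rfl h
  | cons x t ih =>
      intro _
      rcases t.eq_nil_or_concat with rfl | ⟨t', z, rfl⟩
      · exact ⟨x, by simp, by simp⟩
      · obtain ⟨c, hc, hmin⟩ := ih (by simp)
        rcases le_total (f x) (f c) with h | h
        · refine ⟨x, by simp, ?_⟩
          intro v hv
          rcases List.mem_cons.1 hv with h1 | h1
          · exact h1 ▸ le_refl _
          · exact le_trans h (hmin v h1)
        · exact ⟨c, List.mem_cons_of_mem _ hc, fun v hv => by
            rcases List.mem_cons.1 hv with h1 | h1
            · exact h1 ▸ h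
            · exact hmin v h1⟩

/-! ### Loop nesting tree lemmas -/

section LoopNesting

variable {G : V → V → Prop} {s : V} {T : DFSTree G s} {hp : V → V}

theorem IsLoopParent.anc (hlp : IsLoopParent G s T.Anc hp) (z : V) : T.Anc (hp z) z := by
  by_cases hz : z = s
  · subst hz; rw [hlp.1]; exact T.anc_refl _
  · exact (hlp.2 z hz).1

theorem IsLoopParent.anc_of_hanc (hlp : IsLoopParent G s T.Anc hp) {u v : V}
    (h : HAnc hp u v) : T.Anc u v := by
  obtain ⟨n, hn⟩ := h
  induction n generalizing u with
  | zero => exact hn ▸ T.anc_refl v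
  | succ n ih =>
      rw [Function.iterate_succ_apply'] at hn
      exact T.anc_trans (hn ▸ hlp.anc _) (ih rfl)

theorem IsLoopParent.hanc_antisymm (hlp : IsLoopParent G s T.Anc hp) {u v : V}
    (h1 : HAnc hp u v) (h2 : HAnc hp v u) : u = v :=
  T.anc_antisymm (hlp.anc_of_hanc h1) (hlp.anc_of_hanc h2)

theorem IsLoopParent.hanc_s (hlp : IsLoopParent G s T.Anc hp) (v : V) : HAnc hp s v := by
  suffices h : ∀ n v, T.pre v < n → HAnc hp s v from h (T.pre v + 1) v (by omega)
  intro n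
  induction n with
  | zero => intro v h; omega
  | succ n ih =>
      intro v h
      by_cases hv : v = s
      · exact ⟨0, hv⟩
      · have h3 : T.pre (hp v) < T.pre v :=
          T.pre_lt_of_anc (hlp.anc v) (hlp.2 v hv).2.1
        obtain ⟨m, hm⟩ := ih (hp v) (by omega)
        exact ⟨m + 1, by rw [Function.iterate_succ_apply, hm]⟩

theorem IsLoopParent.loop_walk (hlp : IsLoopParent G s T.Anc hp) {w : V} (hw : w ≠ s) :
    ∃ p, Walk G w (hp w) p ∧ ∀ v ∈ p, T.Anc (hp w) v := by
  obtain ⟨p, hp1, hp2⟩ := (hlp.2 w hw).2.2.1.2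
  exact ⟨p, isWalk_iff_walk.1 hp1, hp2⟩

theorem IsLoopParent.max (hlp : IsLoopParent G s T.Anc hp) {w u : V} (hw : w ≠ s)
    (h1 : T.Anc u w) (h2 : u ≠ w) (h3 : InLoop G T.Anc u w) : T.Anc u (hp w) :=
  (hlp.2 w hw).2.2.2 u h1 h2 h3

end LoopNesting

/-! ### Core structural lemmas -/

section Core

variable {G : V → V → Prop} {s : V} {T : DFSTree G s} {hp : V → V} {r : V → V}

/-- If the loop parent of `w` is the head of a bridge, then it dominates `w`. -/
theorem claimJ (hG : StronglyConnected G) (hlp : IsLoopParent G s T.Anc hp) {w a2 : V}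
    (hw : w ≠ s) (hbr : IsBridge G s a2 (hp w)) : Dom G s (hp w) w := by
  by_contra hnd
  obtain ⟨pw, hwp, hnm⟩ := not_dom_iff.1 hnd
  obtain ⟨q, hq, hqm⟩ := hlp.loop_walk hw
  have hcat : Walk G s (hp w) (pw.dropLast ++ q) := hwp.trans hq
  have he := hbr.edgeOn_of_walk hcat
  have ha2 : a2 ≠ hp w := hbr.tail_ne_head (hG s (hp w))
  rcases edgeOn_append_split he with h1 | h1 | h1
  · exact hnm ((List.dropLast_sublist _).subset h1.right_mem)
  · exact ha2 (T.anc_antisymm (T.anc_of_dom hbr.dom_tail) (hqm a2 h1.left_mem))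
  · have h2 := hq.head?_eq
    rw [h1.2] at h2
    have h3 : hp w = w := by injection h2
    exact (hlp.2 w hw).2.1 h3

/-- A non-root boundary vertex has a non-root bridge-decomposition root. -/
theorem claimK (hG : StronglyConnected G) (hlp : IsLoopParent G s T.Anc hp)
    (hrr : ∀ z, IsBDRoot G s (r z) z) {w : V} (hw : w ≠ s)
    (hbd : r (hp w) ≠ r w) : r w ≠ s := by
  intro hrs
  have hζs : r (hp w) ≠ s := by rw [hrs] at hbd; exact hbd
  rcases (hrr (hp w)).2.1 with h | ⟨aζ, hbrζ⟩
  · exact hζs h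
  have hnd : ¬ Dom G s (r (hp w)) w := by
    intro hd
    exact hζs (eq_s_of_dom_s (hrs ▸ (hrr w).2.2 _ hd ⟨aζ, hbrζ⟩))
  obtain ⟨pw, hwp, hnm⟩ := not_dom_iff.1 hnd
  obtain ⟨q, hq, hqm⟩ := hlp.loop_walk hw
  have hcat : Walk G s (hp w) (pw.dropLast ++ q) := hwp.trans hq
  have hζm := dom_iff_walk.1 (hrr (hp w)).1 _ hcat
  have hζq : r (hp w) ∈ q := by
    rcases mem_trans_subset hζm with h | h
    · exact absurd h hnm
    · exact h
  have hζhp : r (hp w) = hp w :=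
    T.anc_antisymm (T.anc_of_dom (hrr (hp w)).1) (hqm _ hζq)
  have hbrζ' : IsBridge G s aζ (hp w) := by rw [← hζhp]; exact hbrζ
  exact hnd (by rw [hζhp]; exact claimJ hG hlp hw hbrζ')

/-- A non-root boundary vertex's root does not dominate its loop parent. -/
theorem claimH (hG : StronglyConnected G) (hlp : IsLoopParent G s T.Anc hp)
    (hrr : ∀ z, IsBDRoot G s (r z) z) {w : V} (hw : w ≠ s)
    (hbd : r (hp w) ≠ r w) : ¬ Dom G s (r w) (hp w) := by
  intro hd
  have hρs : r w ≠ s := claimK hG hlp hrr hw hbd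
  obtain ⟨aρ, hbrρ⟩ := (hrr w).2.1.resolve_left hρs
  have hdζ : Dom G s (r w) (r (hp w)) := (hrr (hp w)).2.2 _ hd ⟨aρ, hbrρ⟩
  rcases (hrr (hp w)).2.1 with h | ⟨aζ, hbrζ⟩
  · exact hρs (eq_s_of_dom_s (h ▸ hdζ))
  by_cases hdw : Dom G s (r (hp w)) w
  · have h2 : Dom G s (r (hp w)) (r w) := (hrr w).2.2 _ hdw ⟨aζ, hbrζ⟩
    exact hbd (h2.antisymm hdζ (hG s (r w)))
  · obtain ⟨pw, hwp, hnm⟩ := not_dom_iff.1 hdw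
    obtain ⟨q, hq, hqm⟩ := hlp.loop_walk hw
    have hcat : Walk G s (hp w) (pw.dropLast ++ q) := hwp.trans hq
    have hζm := dom_iff_walk.1 (hrr (hp w)).1 _ hcat
    have hζq : r (hp w) ∈ q := by
      rcases mem_trans_subset hζm with h | h
      · exact absurd h hnm
      · exact h
    have hζhp : r (hp w) = hp w :=
      T.anc_antisymm (T.anc_of_dom (hrr (hp w)).1) (hqm _ hζq)
    have hbrζ' : IsBridge G s aζ (hp w) := by rw [← hζhp]; exact hbrζ
    exact hdw (by rw [hζhp]; exact claimJ hG hlp hw hbrζ')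

/-- No edge of `G ∖ (a,b)` enters the set of vertices dominated by `b`. -/
theorem del_no_entry {a b g h : V} (hbr : IsBridge G s a b) (he : DelEdge G a b g h)
    (hg : ¬ Dom G s b g) (hh : Dom G s b h) : False := by
  obtain ⟨p, hw, hnb⟩ := not_dom_iff.1 hg
  by_cases hhb : h = b
  · have hwb : Walk G s b (p ++ [b]) := by rw [← hhb]; exact hw.snoc he.1
    have he2 := hbr.edgeOn_of_walk hwb
    rcases edgeOn_append_split he2 with h1 | h1 | h1
    · exact hnb h1.right_mem
    · rcases edgeOn_iff.1 h1 with ⟨l1, l2, hl⟩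
      rcases l1 with _ | ⟨c, l1⟩ <;> simp at hl
    · have h2 := hw.getLast?_eq
      rw [h1.1] at h2
      have h3 : a = g := by injection h2
      exact he.2 ⟨h3.symm, hhb⟩
  · have hwh : Walk G s h (p ++ [h]) := hw.snoc he.1
    have hbm := dom_iff_walk.1 hh _ hwh
    rcases List.mem_append.1 hbm with h1 | h1
    · exact hnb h1
    · simp at h1; exact hhb h1.symm

/-- Any walk in `G ∖ (a,b)` ending at a vertex dominated by `b` stays inside
the set of vertices dominated by `b`. -/
theorem del_walk_dom {a b u v : V} {p : List V} (hbr : IsBridge G s a b)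
    (hw : Walk (DelEdge G a b) u v p) : Dom G s b v → ∀ z ∈ p, Dom G s b z := by
  induction hw with
  | single w =>
      intro hv z hz; simp at hz; subst hz; exact hv
  | @cons u w v p hg hw ih =>
      intro hv z hz
      have hdw : Dom G s b w := ih hv w hw.head_mem
      rcases List.mem_cons.1 hz with h1 | h1
      · subst h1
        by_contra hnd
        exact del_no_entry hbr hg hnd hdw
      · exact ih hv z h1

/-- A walk through descendants of the head of a bridge avoids the bridge. -/
theorem walk_del_of_desc {a b u v : V} {p : List V} (hbr : IsBridge G s a b) (hab : a ≠ b)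
    (hw : Walk G u v p) (hdesc : ∀ z ∈ p, T.Anc b z) : Walk (DelEdge G a b) u v p := by
  have hna : a ∉ p := fun ha =>
    hab (T.anc_antisymm (T.anc_of_dom hbr.dom_tail) (hdesc a ha))
  exact hw.imp_mem fun x y hx _ hg => ⟨hg, fun hxy => hna (hxy.1 ▸ hx)⟩

/-- The crucial uniqueness lemma: two vertices of `D(b)` whose loop parents escape `D(b)`,
that lie on a common closed walk inside `D(b)`, are equal. -/
theorem claimG (hlp : IsLoopParent G s T.Anc hp) (hbr : IsBridge G s a b)
    {u u' : V} {p q : List V}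
    (hpw : Walk G u' u p) (hqw : Walk G u u' q)
    (hpd : ∀ z ∈ p, Dom G s b z) (hqd : ∀ z ∈ q, Dom G s b z)
    (hu : ¬ Dom G s b (hp u)) (hu' : ¬ Dom G s b (hp u')) : u = u' := by
  by_contra hne
  have hbs : b ≠ s := hbr.head_ne_s
  have hus : u ≠ s := fun h => hbs (eq_s_of_dom_s (h ▸ hpd u hpw.last_mem))
  have hu's : u' ≠ s := fun h => hbs (eq_s_of_dom_s (h ▸ hpd u' hpw.head_mem))
  have hdall : ∀ z, z ∈ p ∨ z ∈ q → Dom G s b z := by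
    rintro z (hz | hz)
    · exact hpd z hz
    · exact hqd z hz
  -- the minimum-preorder vertex of the closed walk
  obtain ⟨c, hcm, hcmin⟩ := exists_min_pre T.pre (p ++ q) (by
    intro h
    exact hpw.ne_nil (List.append_eq_nil_iff.1 h).1)
  have hcd : Dom G s b c := hdall c (List.mem_append.1 hcm)
  -- all vertices of `p` and `q` are descendants of `c`
  have hdesc : ∀ z, z ∈ p ∨ z ∈ q → T.Anc c z := by
    have hmain : ∃ R, Walk G c c R ∧ (∀ z, z ∈ p ∨ z ∈ q → z ∈ R) ∧ ∀ z ∈ R, z ∈ p ∨ z ∈ q := by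
      rcases List.mem_append.1 hcm with hcp | hcq
      · obtain ⟨p1, p2, hpe, hw1, hw2, _⟩ := hpw.split_first hcp
        refine ⟨_, (hw2.trans hqw).trans hw1, ?_, ?_⟩
        · rintro z (hz | hz)
          · rw [hpe] at hz
            rcases List.mem_append.1 hz with h1 | h1
            · exact List.mem_append.2 (Or.inr (List.mem_append.2 (Or.inl h1)))
            · exact mem_trans_left (hw2.trans hqw) hw1
                (mem_trans_left hw2 hqw h1)
          · exact mem_trans_left (hw2.trans hqw) hw1
              (List.mem_append.2 (Or.inr hz))
        · intro z hz
          rcases mem_trans_subset hz with h1 | h1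
          · rcases mem_trans_subset h1 with h2 | h2
            · left; rw [hpe]; exact List.mem_append.2 (Or.inr h2)
            · right; exact h2
          · left; rw [hpe]
            rcases List.mem_append.1 h1 with h2 | h2
            · exact List.mem_append.2 (Or.inl h2)
            · simp at h2; simp [h2]
      · obtain ⟨q1, q2, hqe, hw1, hw2, _⟩ := hqw.split_first hcq
        refine ⟨_, (hw2.trans hpw).trans hw1, ?_, ?_⟩
        · rintro z (hz | hz)
          · exact mem_trans_left (hw2.trans hpw) hw1
              (List.mem_append.2 (Or.inr hz))
          · rw [hqe] at hz
            rcases List.mem_append.1 hz with h1 | h1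
            · exact List.mem_append.2 (Or.inr (List.mem_append.2 (Or.inl h1)))
            · exact mem_trans_left (hw2.trans hpw) hw1
                (mem_trans_left hw2 hpw h1)
        · intro z hz
          rcases mem_trans_subset hz with h1 | h1
          · rcases mem_trans_subset h1 with h2 | h2
            · right; rw [hqe]; exact List.mem_append.2 (Or.inr h2)
            · left; exact h2
          · right; rw [hqe]
            rcases List.mem_append.1 h1 with h2 | h2
            · exact List.mem_append.2 (Or.inl h2)
            · simp at h2; simp [h2]
    obtain ⟨R, hRw, hRin, hRsub⟩ := hmain
    intro z hz
    refine T.descend hRw (T.anc_refl c) ?_ z (hRin z hz)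
    intro v hv
    exact hcmin v (List.mem_append.2 (hRsub v hv))
  -- a walk from `u` (or `u'`) to `c` inside `p ∪ q`
  have hctr : ∀ w : V, w ≠ s → w ∈ p → ¬ Dom G s b (hp w) → c ≠ w →
      (∃ pc, Walk G w c pc ∧ ∀ z ∈ pc, z ∈ p ∨ z ∈ q) → False := by
    intro w hws hwp hnw hcw ⟨pc, hpcw, hpcm⟩
    have hloop : InLoop G T.Anc c w :=
      ⟨hdesc w (Or.inl hwp), pc, isWalk_iff_walk.2 hpcw, fun y hy => hdesc y (hpcm y hy)⟩
    have hanc : T.Anc c (hp w) := hlp.max hws (hdesc w (Or.inl hwp)) hcw hloop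
    -- contradiction: `hp w` escapes `D(b)` but is below `c ∈ D(b)`
    have h1 : T.Anc b (hp w) := T.anc_trans (T.anc_of_dom hcd) hanc
    by_cases hbu : hp w = b
    · exact hnw (hbu ▸ dom_refl G s b)
    · obtain ⟨pw, hwpw, hnm⟩ := not_dom_iff.1 hnw
      obtain ⟨tp, htw, htm⟩ := T.exists_tree_walk (hlp.anc w)
      have hbt : b ∉ tp := fun hbm => hbu (T.anc_antisymm (htm b hbm).1 h1)
      have hcat : Walk G s w (pw.dropLast ++ tp) := hwpw.trans htw
      have hbmem := dom_iff_walk.1 (hpd w hwp) _ hcat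
      rcases mem_trans_subset hbmem with h2 | h2
      · exact hnm h2
      · exact hbt h2
  by_cases hcu : c = u
  ·
    subst hcu
    exact hctr u' hu's hpw.head_mem hu' hne
      ⟨p, hpw, fun z hz => Or.inl hz⟩
  · -- use `u`: build a walk from u to c
    have hwuc : ∃ pc, Walk G u c pc ∧ ∀ z ∈ pc, z ∈ p ∨ z ∈ q := by
      rcases List.mem_append.1 hcm with hcp | hcq
      · obtain ⟨p1, p2, hpe, hw1, _, _⟩ := hpw.split_first hcp
        refine ⟨_, hqw.trans hw1, ?_⟩
        intro z hz
        rcases mem_trans_subset hz with h1 | h1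
        · exact Or.inr h1
        · left; rw [hpe]
          rcases List.mem_append.1 h1 with h2 | h2
          · exact List.mem_append.2 (Or.inl h2)
          · simp at h2; simp [h2]
      · obtain ⟨q1, q2, hqe, hw1, _, _⟩ := hqw.split_first hcq
        refine ⟨_, hw1, ?_⟩
        intro z hz
        right; rw [hqe]
        rcases List.mem_append.1 hz with h2 | h2
        · exact List.mem_append.2 (Or.inl h2)
        · simp at h2; simp [h2]
    exact hctr u hus hpw.last_mem hu hcu hwuc

/-! ### Chains to the nearest boundary vertex -/

theorem nearest_chain (hlp : IsLoopParent G s T.Anc hp) {x bx : V}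
    (hbx : IsNearestBoundary s r hp x bx) :
    ∃ n, hp^[n] x = bx ∧ ∀ j < n, hp^[j] x ≠ s ∧ r (hp (hp^[j] x)) = r (hp^[j] x) := by
  classical
  have hex : ∃ n, hp^[n] x = bx := hbx.1
  refine ⟨Nat.find hex, Nat.find_spec hex, ?_⟩
  intro j hj
  have hne : hp^[j] x ≠ bx := Nat.find_min hex hj
  have hnb : ¬ Boundary s r hp (hp^[j] x) := by
    intro hbd
    apply hne
    refine hlp.hanc_antisymm (hbx.2.2 _ ⟨j, rfl⟩ hbd) ⟨Nat.find hex - j, ?_⟩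
    rw [← Function.iterate_add_apply, Nat.sub_add_cancel (le_of_lt hj), Nat.find_spec hex]
  rw [Boundary] at hnb
  push_neg at hnb
  exact hnb

theorem chain_r_const {x : V} {n : ℕ}
    (hprop : ∀ j < n, hp^[j] x ≠ s ∧ r (hp (hp^[j] x)) = r (hp^[j] x)) :
    ∀ j ≤ n, r (hp^[j] x) = r x := by
  intro j
  induction j with
  | zero => intro _; rfl
  | succ j ih =>
      intro hj
      rw [Function.iterate_succ_apply', (hprop j (by omega)).2, ih (by omega)]

theorem chain_dom (hrr : ∀ z, IsBDRoot G s (r z) z) {b x : V} {n : ℕ}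
    (hbh : IsBridgeHead G s b) (hdx : Dom G s b x)
    (hprop : ∀ j < n, hp^[j] x ≠ s ∧ r (hp (hp^[j] x)) = r (hp^[j] x)) :
    ∀ j ≤ n, Dom G s b (hp^[j] x) := by
  intro j
  induction j with
  | zero => intro _; exact hdx
  | succ j ih =>
      intro hj
      have h1 : Dom G s b (r (hp^[j] x)) := (hrr _).2.2 _ (ih (by omega)) hbh
      rw [← (hprop j (by omega)).2] at h1
      rw [Function.iterate_succ_apply']
      exact h1.trans (hrr _).1

theorem chain_reach_del (hlp : IsLoopParent G s T.Anc hp) {a b x : V}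
    (hbr : IsBridge G s a b) (hab : a ≠ b) :
    ∀ n, (∀ j ≤ n, Dom G s b (hp^[j] x)) → (∀ j < n, hp^[j] x ≠ s) →
      Reach (DelEdge G a b) x (hp^[n] x) := by
  intro n
  induction n with
  | zero => intro _ _; exact reach_self _ _
  | succ n ih =>
      intro hdom hne
      have hr1 := ih (fun j hj => hdom j (by omega)) (fun j hj => hne j (by omega))
      obtain ⟨q, hq, hqm⟩ := hlp.loop_walk (hne n (by omega))
      have hanc : T.Anc b (hp (hp^[n] x)) := T.anc_of_dom (by
        rw [← Function.iterate_succ_apply' hp n x]; exact hdom (n+1) le_rfl)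
      have hqdel : Walk (DelEdge G a b) _ _ q := walk_del_of_desc hbr hab hq
        (fun z hz => T.anc_trans hanc (hqm z hz))
      refine hr1.trans' ?_
      rw [Function.iterate_succ_apply']
      exact reach_iff_walk.2 ⟨q, hqdel⟩

theorem tree_reach_del {a b z x : V} (hbr : IsBridge G s a b) (hab : a ≠ b)
    (hanc : T.Anc z x) (hdz : Dom G s b z) : Reach (DelEdge G a b) z x := by
  obtain ⟨p, hw, hm⟩ := T.exists_tree_walk hanc
  exact reach_iff_walk.2 ⟨p, walk_del_of_desc hbr hab hw
    (fun v hv => T.anc_trans (T.anc_of_dom hdz) (hm v hv).1)⟩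

/-- Lemma M: inside `D(b)`, equal labels give strong connectivity after deleting
the bridge `(a,b)`. -/
theorem lemmaM (hG : StronglyConnected G) (hlp : IsLoopParent G s T.Anc hp)
    (hrr : ∀ z, IsBDRoot G s (r z) z) {a b x y bx bY : V}
    (hbr : IsBridge G s a b) (hdx : Dom G s b x) (hdy : Dom G s b y)
    (hbx : IsNearestBoundary s r hp x bx) (hbY : IsNearestBoundary s r hp y bY)
    (hbb : bx = bY) : SConn (DelEdge G a b) x y := by
  subst hbb
  have hab : a ≠ b := hbr.tail_ne_head (hG s b)
  have hbh : IsBridgeHead G s b := ⟨a, hbr⟩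
  obtain ⟨n, hnx, hpx⟩ := nearest_chain hlp hbx
  obtain ⟨m, hny, hpy⟩ := nearest_chain hlp hbY
  have hdcx := chain_dom hrr hbh hdx hpx
  have hdcy := chain_dom hrr hbh hdy hpy
  have hr1 : Reach (DelEdge G a b) x bx :=
    hnx ▸ chain_reach_del hlp hbr hab n hdcx (fun j hj => (hpx j hj).1)
  have hr2 : Reach (DelEdge G a b) y bx :=
    hny ▸ chain_reach_del hlp hbr hab m hdcy (fun j hj => (hpy j hj).1)
  have hr3 : Reach (DelEdge G a b) bx x :=
    tree_reach_del hbr hab (hlp.anc_of_hanc hbx.1) (hnx ▸ hdcx n le_rfl)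
  have hr4 : Reach (DelEdge G a b) bx y :=
    tree_reach_del hbr hab (hlp.anc_of_hanc hbY.1) (hny ▸ hdcy m le_rfl)
  exact ⟨hr1.trans' hr4, hr2.trans' hr3⟩

end Core

/-! ### Reversal transfer lemmas -/

section Transfer

variable {G : V → V → Prop} {s : V}

theorem sc_rev (hG : StronglyConnected G) : StronglyConnected (Rev G) :=
  fun u v => reach_rev_iff.2 (hG v u)

theorem tec_symm {x y : V} (h : TwoEdgeConnected G x y) : TwoEdgeConnected G y x :=
  fun a b hab => (h a b hab).symm'

theorem tec_rev {x y : V} (htec : TwoEdgeConnected G x y) : TwoEdgeConnected (Rev G) x y := by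
  intro a b hab
  have h := htec b a hab
  have h2 : SConn (Rev (DelEdge G b a)) x y := sconn_rev_iff.2 h
  refine sconn_imp ?_ h2
  rintro u v ⟨hg, hne⟩
  exact ⟨hg, fun h3 => hne ⟨h3.2, h3.1⟩⟩

theorem sconn_del_rev {a b x y : V} (h : SConn (DelEdge (Rev G) b a) x y) :
    SConn (DelEdge G a b) x y := by
  have h2 : SConn (Rev (DelEdge G a b)) x y := by
    refine sconn_imp ?_ h
    rintro u v ⟨hg, hne⟩
    exact ⟨hg, fun h3 => hne ⟨h3.2, h3.1⟩⟩
  exact sconn_rev_iff.1 h2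

theorem reach_del_to_s_of_not_domR {a b v : V} (h : ¬ Dom (Rev G) s a v) :
    Reach (DelEdge G a b) v s := by
  obtain ⟨p, hw, hnm⟩ := not_dom_iff.1 h
  have h5 : Walk (DelEdge (Rev G) b a) s v p := walk_delEdge_of_not_mem hw hnm
  refine reach_iff_walk.2 ⟨_, h5.reverse.imp ?_⟩
  rintro u w ⟨hg, hne⟩
  exact ⟨hg, fun h3 => hne ⟨h3.2, h3.1⟩⟩

theorem reach_del_s_of_not_bridge {a b : V} (hab : G a b) (hnb : ¬ IsBridge G s a b) :
    ∀ v, Reach G s v → Reach (DelEdge G a b) s v := by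
  classical
  have hex : ∃ p, Walk G s b p ∧ ¬ EdgeOn a b p := by
    rw [IsBridge] at hnb; push_neg at hnb
    obtain ⟨p, hp1, hp2⟩ := hnb hab
    exact ⟨p, isWalk_iff_walk.1 hp1, hp2⟩
  obtain ⟨p0, hw0, he0⟩ := hex
  have hb0 : Reach (DelEdge G a b) s b :=
    reach_iff_walk.2 ⟨p0, walk_delEdge_of_not_edgeOn hw0 he0⟩
  intro v hv
  rcases reach_iff_walk.1 hv with ⟨p, hw⟩
  suffices h : ∀ (u w : V) (p : List V), Walk G u w p →
      Reach (DelEdge G a b) s u → Reach (DelEdge G a b) s w from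
    h s v p hw (reach_self _ _)
  intro u w p hw2
  induction hw2 with
  | single v => exact id
  | @cons u t w p hg hwt ih =>
      intro hu
      by_cases he : u = a ∧ t = b
      · exact ih (he.2 ▸ hb0)
      · exact ih (hu.trans' (reach_iff_walk.2 ⟨[u, t], Walk.cons ⟨hg, he⟩ (Walk.single t)⟩))

theorem reach_del_to_s_of_not_bridge_rev {a b : V} (hab : G a b)
    (hnb : ¬ IsBridge (Rev G) s b a) :
    ∀ v, Reach G v s → Reach (DelEdge G a b) v s := by
  classical
  have hex : ∃ p, Walk (Rev G) s a p ∧ ¬ EdgeOn b a p := by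
    rw [IsBridge] at hnb; push_neg at hnb
    obtain ⟨p, hp1, hp2⟩ := hnb hab
    exact ⟨p, isWalk_iff_walk.1 hp1, hp2⟩
  obtain ⟨p0, hw0, he0⟩ := hex
  have ha0 : Reach (DelEdge G a b) a s := by
    have h1 : Walk (DelEdge (Rev G) b a) s a p0 := walk_delEdge_of_not_edgeOn hw0 he0
    refine reach_iff_walk.2 ⟨_, h1.reverse.imp ?_⟩
    rintro u w ⟨hg, hne⟩
    exact ⟨hg, fun h3 => hne ⟨h3.2, h3.1⟩⟩
  intro v hv
  rcases reach_iff_walk.1 hv with ⟨p, hw⟩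
  suffices h : ∀ (u w : V) (p : List V), Walk G u w p →
      Reach (DelEdge G a b) w s → Reach (DelEdge G a b) u s from
    h v s p hw (reach_self _ _)
  intro u w p hw2
  induction hw2 with
  | single v => exact id
  | @cons u t w p hg hwt ih =>
      intro hws
      by_cases he : u = a ∧ t = b
      · exact he.1 ▸ ha0
      · exact (reach_iff_walk.2 ⟨[u, t], Walk.cons ⟨hg, he⟩ (Walk.single t)⟩).trans' (ih hws)

end Transfer

/-! ### The forward direction -/

section Forward

variable {G : V → V → Prop} {s : V} {T : DFSTree G s} {hp : V → V} {r : V → V}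

theorem forward_r (hG : StronglyConnected G) (hrr : ∀ z, IsBDRoot G s (r z) z)
    {x y : V} (htec : TwoEdgeConnected G x y) : r x = r y := by
  have key : ∀ x' y', TwoEdgeConnected G x' y' → ∀ c a', IsBridge G s a' c →
      Dom G s c x' → Dom G s c y' := by
    intro x' y' ht c a' hbr hdx
    by_contra hnd
    obtain ⟨p, hw, hnm⟩ := not_dom_iff.1 hnd
    have hdel : Walk (DelEdge G a' c) s y' p := walk_delEdge_of_not_mem hw hnm
    have hsc := ht a' c hbr.1
    exact no_del_reach_of_dom hbr hdx ((reach_iff_walk.2 ⟨p, hdel⟩).trans' hsc.2)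
  rcases (hrr x).2.1 with hx | ⟨ax, hbrx⟩
  · rcases (hrr y).2.1 with hy | ⟨ay, hbry⟩
    · rw [hx, hy]
    · have h1 : Dom G s (r y) x := key y x (tec_symm htec) _ _ hbry (hrr y).1
      have h2 : Dom G s (r y) (r x) := (hrr x).2.2 _ h1 ⟨ay, hbry⟩
      rw [hx] at h2
      rw [hx, eq_s_of_dom_s h2]
  · rcases (hrr y).2.1 with hy | ⟨ay, hbry⟩
    · have h1 : Dom G s (r x) y := key x y htec _ _ hbrx (hrr x).1
      have h2 : Dom G s (r x) (r y) := (hrr y).2.2 _ h1 ⟨ax, hbrx⟩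
      rw [hy] at h2
      rw [hy, eq_s_of_dom_s h2]
    · have h1 : Dom G s (r x) y := key x y htec _ _ hbrx (hrr x).1
      have h2 : Dom G s (r x) (r y) := (hrr y).2.2 _ h1 ⟨ax, hbrx⟩
      have h3 : Dom G s (r y) x := key y x (tec_symm htec) _ _ hbry (hrr y).1
      have h4 : Dom G s (r y) (r x) := (hrr x).2.2 _ h3 ⟨ay, hbry⟩
      exact h2.antisymm h4 (hG s (r y))

theorem forward_b_core (hG : StronglyConnected G) (hlp : IsLoopParent G s T.Anc hp)
    (hrr : ∀ z, IsBDRoot G s (r z) z) {x y bx bY : V} (htec : TwoEdgeConnected G x y)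
    (hrxy : r x = r y) (hbx : IsNearestBoundary s r hp x bx)
    (hbY : IsNearestBoundary s r hp y bY) (hne : bx ≠ bY) (hYs : bY ≠ s) : False := by
  obtain ⟨n, hnx, hpx⟩ := nearest_chain hlp hbx
  obtain ⟨m, hny, hpy⟩ := nearest_chain hlp hbY
  have hrbx : r bx = r x := by rw [← hnx]; exact chain_r_const hpx n le_rfl
  have hrbY : r bY = r y := by rw [← hny]; exact chain_r_const hpy m le_rfl
  have hbdY : r (hp bY) ≠ r bY := hbY.2.1.resolve_left hYs
  have hρs : r bY ≠ s := claimK hG hlp hrr hYs hbdY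
  obtain ⟨aρ, hbrρ⟩ := (hrr bY).2.1.resolve_left hρs
  have hab : aρ ≠ r bY := hbrρ.tail_ne_head (hG s (r bY))
  have hbh : IsBridgeHead G s (r bY) := ⟨aρ, hbrρ⟩
  have hx_eq : r x = r bY := by rw [hrxy, ← hrbY]
  have hy_eq : r y = r bY := hrbY.symm
  have hdxρ : Dom G s (r bY) x := by rw [← hx_eq]; exact (hrr x).1
  have hdyρ : Dom G s (r bY) y := by rw [← hy_eq]; exact (hrr y).1
  have hdcx := chain_dom hrr hbh hdxρ hpx
  have hdcy := chain_dom hrr hbh hdyρ hpy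
  have hr1 : Reach (DelEdge G aρ (r bY)) x bx :=
    hnx ▸ chain_reach_del hlp hbrρ hab n hdcx (fun j hj => (hpx j hj).1)
  have hr2 : Reach (DelEdge G aρ (r bY)) y bY :=
    hny ▸ chain_reach_del hlp hbrρ hab m hdcy (fun j hj => (hpy j hj).1)
  have hdbx : Dom G s (r bY) bx := hnx ▸ hdcx n le_rfl
  have hdbY : Dom G s (r bY) bY := hny ▸ hdcy m le_rfl
  have hr3 : Reach (DelEdge G aρ (r bY)) bx x :=
    tree_reach_del hbrρ hab (hlp.anc_of_hanc hbx.1) hdbx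
  have hr4 : Reach (DelEdge G aρ (r bY)) bY y :=
    tree_reach_del hbrρ hab (hlp.anc_of_hanc hbY.1) hdbY
  obtain ⟨hxy, hyx⟩ := htec aρ (r bY) hbrρ.1
  have hQ : Reach (DelEdge G aρ (r bY)) bx bY := (hr3.trans' hxy).trans' hr2
  have hP : Reach (DelEdge G aρ (r bY)) bY bx := (hr4.trans' hyx).trans' hr1
  rcases reach_iff_walk.1 hP with ⟨P, hPw⟩
  rcases reach_iff_walk.1 hQ with ⟨Q, hQw⟩
  have hPd := del_walk_dom hbrρ hPw hdbx
  have hQd := del_walk_dom hbrρ hQw hdbY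
  have hhbY : ¬ Dom G s (r bY) (hp bY) := claimH hG hlp hrr hYs hbdY
  have hhbx : ¬ Dom G s (r bY) (hp bx) := by
    by_cases hxs : bx = s
    · rw [hxs, hlp.1]
      intro hd
      exact hρs (eq_s_of_dom_s hd)
    · have hbdx : r (hp bx) ≠ r bx := hbx.2.1.resolve_left hxs
      have h5 := claimH hG hlp hrr hxs hbdx
      rwa [hrbx, hx_eq] at h5
  exact hne (claimG hlp hbrρ hPw.of_del hQw.of_del hPd hQd hhbx hhbY)

theorem forward_b (hG : StronglyConnected G) (hlp : IsLoopParent G s T.Anc hp)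
    (hrr : ∀ z, IsBDRoot G s (r z) z) {x y bx bY : V} (htec : TwoEdgeConnected G x y)
    (hrxy : r x = r y) (hbx : IsNearestBoundary s r hp x bx)
    (hbY : IsNearestBoundary s r hp y bY) : bx = bY := by
  by_contra hne
  by_cases hYs : bY = s
  · have hxs : bx ≠ s := by rw [← hYs]; exact hne
    exact forward_b_core hG hlp hrr (tec_symm htec) hrxy.symm hbY hbx
      (fun h => hne h.symm) hxs
  · exact forward_b_core hG hlp hrr htec hrxy hbx hbY hne hYs

end Forward

/-- Two vertices of a strongly connected digraph are 2-edge-connected if and only if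
they have the same bridge-decomposition roots in `D` and `D^R` and the same nearest
boundary ancestors in `H` and `H^R`. -/
theorem stmt12 (G : V → V → Prop) (hG : StronglyConnected G) (s : V)
    (T : DFSTree G s) (TR : DFSTree (Rev G) s)
    (hp hpR : V → V)
    (hlp : IsLoopParent G s T.Anc hp) (hlpR : IsLoopParent (Rev G) s TR.Anc hpR)
    (r rR : V → V)
    (hr : ∀ z, IsBDRoot G s (r z) z) (hrR : ∀ z, IsBDRoot (Rev G) s (rR z) z)
    (x y : V) (bx bY bxR bYR : V)
    (hbx : IsNearestBoundary s r hp x bx) (hbY : IsNearestBoundary s r hp y bY)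
    (hbxR : IsNearestBoundary s rR hpR x bxR) (hbYR : IsNearestBoundary s rR hpR y bYR) :
    TwoEdgeConnected G x y ↔ (r x = r y ∧ bx = bY ∧ rR x = rR y ∧ bxR = bYR) := by
  constructor
  · intro htec
    have h1 : r x = r y := forward_r hG hr htec
    have h3 : rR x = rR y := forward_r (sc_rev hG) hrR (tec_rev htec)
    exact ⟨h1, forward_b hG hlp hr htec h1 hbx hbY, h3,
      forward_b (sc_rev hG) hlpR hrR (tec_rev htec) h3 hbxR hbYR⟩
  · rintro ⟨h1, h2, h3, h4⟩
    intro a b hab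
    classical
    by_cases hfb : IsBridge G s a b
    · by_cases hdx : Dom G s b x
      · have hdy : Dom G s b y := by
          have h5 : Dom G s b (r x) := (hr x).2.2 _ hdx ⟨a, hfb⟩
          rw [h1] at h5
          exact h5.trans (hr y).1
        exact lemmaM hG hlp hr hfb hdx hdy hbx hbY h2
      · have hdy : ¬ Dom G s b y := by
          intro hdy
          apply hdx
          have h5 : Dom G s b (r y) := (hr y).2.2 _ hdy ⟨a, hfb⟩
          rw [← h1] at h5
          exact h5.trans (hr x).1
        have hsx : Reach (DelEdge G a b) s x := reach_del_of_not_dom hdx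
        have hsy : Reach (DelEdge G a b) s y := reach_del_of_not_dom hdy
        by_cases hrb : IsBridge (Rev G) s b a
        · by_cases hdxR : Dom (Rev G) s a x
          · have hdyR : Dom (Rev G) s a y := by
              have h5 : Dom (Rev G) s a (rR x) := (hrR x).2.2 _ hdxR ⟨b, hrb⟩
              rw [h3] at h5
              exact h5.trans (hrR y).1
            exact sconn_del_rev (lemmaM (sc_rev hG) hlpR hrR hrb hdxR hdyR hbxR hbYR h4)
          · have hdyR : ¬ Dom (Rev G) s a y := by
              intro hdyR
              apply hdxR
              have h5 : Dom (Rev G) s a (rR y) := (hrR y).2.2 _ hdyR ⟨b, hrb⟩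
              rw [← h3] at h5
              exact h5.trans (hrR x).1
            exact ⟨(reach_del_to_s_of_not_domR hdxR).trans' hsy,
              (reach_del_to_s_of_not_domR hdyR).trans' hsx⟩
        · exact ⟨(reach_del_to_s_of_not_bridge_rev hab hrb x (hG x s)).trans' hsy,
            (reach_del_to_s_of_not_bridge_rev hab hrb y (hG y s)).trans' hsx⟩
    · have hsall := reach_del_s_of_not_bridge hab hfb
      have hsx := hsall x (hG s x)
      have hsy := hsall y (hG s y)
      by_cases hrb : IsBridge (Rev G) s b a
      · by_cases hdxR : Dom (Rev G) s a x
        · have hdyR : Dom (Rev G) s a y := by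
            have h5 : Dom (Rev G) s a (rR x) := (hrR x).2.2 _ hdxR ⟨b, hrb⟩
            rw [h3] at h5
            exact h5.trans (hrR y).1
          exact sconn_del_rev (lemmaM (sc_rev hG) hlpR hrR hrb hdxR hdyR hbxR hbYR h4)
        · have hdyR : ¬ Dom (Rev G) s a y := by
            intro hdyR
            apply hdxR
            have h5 : Dom (Rev G) s a (rR y) := (hrR y).2.2 _ hdyR ⟨b, hrb⟩
            rw [← h3] at h5
            exact h5.trans (hrR x).1
          exact ⟨(reach_del_to_s_of_not_domR hdxR).trans' hsy,
            (reach_del_to_s_of_not_domR hdyR).trans' hsx⟩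
      · exact ⟨(reach_del_to_s_of_not_bridge_rev hab hrb x (hG x s)).trans' hsy,
          (reach_del_to_s_of_not_bridge_rev hab hrb y (hG y s)).trans' hsx⟩

end StrongConn
end

section
/- Let G be a strongly connected digraph with start vertex s, and let u be a strong articulation point that is a nontrivial dominator of G_s but not of G_s^R. Then the subgraph of G\u induced by V \ D(u) is a strongly connected component of G\u. -/
namespace StrongConn

variable {V : Type*}

section Aux

variable {G : V → V → Prop} {s u x y z : V} {p q : List V}

lemma isWalk_singleton (x : V) : IsWalk G x x [x] := by
  refine ⟨List.isChain_singleton x, by simp, by simp⟩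

lemma IsWalk.start_mem (h : IsWalk G x y p) : x ∈ p := by
  cases p with
  | nil => simp [IsWalk] at h
  | cons a t =>
    have : a = x := by simpa using h.2.1
    simp [this]

lemma IsWalk.end_mem (h : IsWalk G x y p) : y ∈ p := by
  obtain ⟨hne, he⟩ := List.mem_getLast?_eq_getLast h.2.2
  rw [he]
  exact p.getLast_mem hne

lemma isWalk_cons (hab : G x y) (h : IsWalk G y z p) : IsWalk G x z (x :: p) := by
  obtain ⟨hc, hh, hl⟩ := h
  refine ⟨List.isChain_cons.2 ⟨fun w hw => ?_, hc⟩, by simp, ?_⟩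
  · cases p with
    | nil => simp at hw
    | cons a t =>
      have : a = y := by simpa using hh
      simp at hw
      rw [← hw, this]; exact hab
  · cases p with
    | nil => simp at hh
    | cons a t => simpa using hl

lemma isWalk_append_edge (h : IsWalk G s x p) (hxy : G x y) :
    IsWalk G s y (p ++ [y]) := by
  obtain ⟨hc, hh, hl⟩ := h
  refine ⟨List.isChain_append.2 ⟨hc, by simp, ?_⟩, ?_, by simp⟩
  · intro a ha b hb
    simp at hb
    rw [hl] at ha
    simp at ha
    rw [← ha, ← hb]; exact hxy
  · cases p with
    | nil => simp at hh
    | cons a t => simpa using hh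

lemma rtg_of_isWalk (h : IsWalk G x y p) : Relation.ReflTransGen G x y := by
  induction p generalizing x with
  | nil => simp [IsWalk] at h
  | cons a t ih =>
    obtain ⟨hc, hh, hl⟩ := h
    have hax : a = x := by simpa using hh
    subst hax
    cases t with
    | nil =>
      have : a = y := by simpa using hl
      exact this ▸ Relation.ReflTransGen.refl
    | cons b t' =>
      unfold List.Chain' at hc; rw [List.isChain_cons_cons] at hc
      exact Relation.ReflTransGen.head hc.1
        (ih ⟨hc.2, by simp, by simpa using hl⟩)

lemma reach_of_rtg (h : Relation.ReflTransGen G x y) : Reach G x y := by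
  induction h using Relation.ReflTransGen.head_induction_on with
  | refl => exact ⟨[y], isWalk_singleton y⟩
  | head hab _ ih =>
    obtain ⟨p, hp⟩ := ih
    exact ⟨_ :: p, isWalk_cons hab hp⟩

lemma Reach.trans'_s15 (h1 : Reach G x y) (h2 : Reach G y z) : Reach G x z := by
  obtain ⟨p, hp⟩ := h1; obtain ⟨q, hq⟩ := h2
  exact reach_of_rtg ((rtg_of_isWalk hp).trans (rtg_of_isWalk hq))

lemma chain'_delVertex (h : p.Chain' G) (hu : u ∉ p) : p.Chain' (DelVertex G u) := by
  induction p with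
  | nil => exact List.isChain_nil
  | cons a t ih =>
    cases t with
    | nil => exact List.isChain_singleton _
    | cons b t' =>
      unfold List.Chain' at h ⊢; rw [List.isChain_cons_cons] at h ⊢
      refine ⟨⟨h.1, ?_, ?_⟩, ih h.2 (fun hz => hu (by simp [hz]))⟩
      · intro hau; exact hu (by simp [hau])
      · intro hbu; exact hu (by simp [hbu])

lemma isWalk_delVertex (h : IsWalk G x y p) (hu : u ∉ p) :
    IsWalk (DelVertex G u) x y p :=
  ⟨chain'_delVertex h.1 hu, h.2.1, h.2.2⟩

lemma isWalk_rev (h : IsWalk (Rev G) x y p) : IsWalk G y x p.reverse := by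
  obtain ⟨hc, hh, hl⟩ := h
  refine ⟨?_, by simpa using hl, by simpa using hh⟩
  unfold List.Chain'; rw [List.isChain_reverse]
  exact hc

end Aux

/-- If `u` is a strong articulation point that is a nontrivial dominator of `G_s` but
not of `G_s^R`, then `V \ D(u)` is a strongly connected component of `G \ u`. -/
theorem stmt15 (G : V → V → Prop) (hG : StronglyConnected G) (s u : V)
    (hsap : IsStrongArticulationPoint G u)
    (hnd : NontrivialDom G s u) (hndR : ¬ NontrivialDom (Rev G) s u) :
    IsSCC (DelVertex G u) {w | ¬ Dom G s u w} := by
  obtain ⟨hus, -⟩ := hnd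
  -- every vertex in the set admits an avoiding walk from s, and is ≠ u
  have hfwd : ∀ w, ¬ Dom G s u w → (∃ p, IsWalk G s w p ∧ u ∉ p) := by
    intro w hw
    rw [Dom] at hw
    push_neg at hw
    exact hw
  -- every vertex ≠ u reaches s in G \ u
  have hback : ∀ w, w ≠ u → Reach (DelVertex G u) w s := by
    intro w hw
    by_cases hws : w = s
    · subst hws
      exact ⟨[w], isWalk_singleton w⟩
    · have : ¬ Dom (Rev G) s u w := by
        intro hd
        exact hndR ⟨hus, w, hw, hd⟩
      rw [Dom] at this
      push_neg at this
      obtain ⟨p, hp, hup⟩ := this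
      refine ⟨p.reverse, isWalk_delVertex (isWalk_rev hp) (by simpa using hup)⟩
  have hsreach : ∀ w, ¬ Dom G s u w → Reach (DelVertex G u) s w := by
    intro w hw
    obtain ⟨p, hp, hup⟩ := hfwd w hw
    exact ⟨p, isWalk_delVertex hp hup⟩
  have hne : ∀ w, ¬ Dom G s u w → w ≠ u := by
    intro w hw hwu
    subst hwu
    exact hw (fun p hp => hp.end_mem)
  refine ⟨⟨s, ?_⟩, ?_, ?_⟩
  · intro hd
    have := hd [s] (isWalk_singleton s)
    simp at this
    exact hus this
  · intro x hx y hy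
    exact ⟨(hback x (hne x hx)).trans'_s15 (hsreach y hy),
      (hback y (hne y hy)).trans'_s15 (hsreach x hx)⟩
  · intro x hx y hxy
    obtain ⟨p, hp, hup⟩ := hfwd x hx
    obtain ⟨q, hq⟩ := hxy.1
    have hrtg := rtg_of_isWalk hq
    clear hxy hq
    -- build a walk from s to y avoiding u, by induction along the path in G \ u
    have : ∃ r, IsWalk G s y r ∧ u ∉ r := by
      induction hrtg with
      | refl => exact ⟨p, hp, hup⟩
      | tail _ hbc ih =>
        obtain ⟨r, hr, hur⟩ := ih
        refine ⟨r ++ [_], isWalk_append_edge hr hbc.1, ?_⟩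
        simp only [List.mem_append, List.mem_singleton]
        rintro (h | h)
        · exact hur h
        · exact hbc.2.2 h.symm
    obtain ⟨r, hr, hur⟩ := this
    intro hd
    exact hur (hd r hr)

end StrongConn
end

section
/- Let D and H be the dominator tree and the loop nesting tree of a flow graph G_s. Suppose x ≠ s is a vertex such that h(x), the parent of x in H, is not a sibling of x in D. Then no vertex in the path of H from s to h(x) is a sibling of x in D. -/
namespace StrongConn

variable {V : Type*}

section Aux

variable {G : V → V → Prop} {s : V} (T : DFSTree G s)

lemma anc_refl (v : V) : T.Anc v v := ⟨0, rfl⟩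

lemma anc_trans {a b c : V} (h1 : T.Anc a b) (h2 : T.Anc b c) : T.Anc a c := by
  obtain ⟨n, hn⟩ := h1
  obtain ⟨m, hm⟩ := h2
  exact ⟨n + m, by rw [Function.iterate_add_apply, hm, hn]⟩

lemma parent_step (v : V) : T.Anc (T.parent v) v := ⟨1, rfl⟩

lemma iterate_root (n : ℕ) : T.parent^[n] s = s := by
  induction n with
  | zero => rfl
  | succ n ih => rw [Function.iterate_succ_apply', ih, T.parent_root]

lemma anc_pre {u v : V} (h : T.Anc u v) : T.pre u ≤ T.pre v := by
  obtain ⟨n, rfl⟩ := h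
  induction n with
  | zero => rfl
  | succ n ih =>
    rw [Function.iterate_succ_apply']
    by_cases hw : T.parent^[n] v = s
    · rw [hw, T.parent_root]; rw [hw] at ih; exact ih
    · exact le_of_lt (lt_of_lt_of_le (T.pre_parent _ hw) ih)

lemma anc_pre_strict {u v : V} (h : T.Anc u v) (hne : u ≠ v) :
    T.pre u < T.pre v := by
  obtain ⟨n, hn⟩ := h
  by_cases hv : v = s
  · subst hv; rw [iterate_root] at hn; exact absurd hn.symm hne
  cases n with
  | zero =>
    rw [Function.iterate_zero_apply] at hn
    exact absurd hn.symm hne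
  | succ n =>
    rw [Function.iterate_succ_apply] at hn
    exact lt_of_le_of_lt (anc_pre T ⟨n, hn⟩) (T.pre_parent _ hv)

lemma anc_walk {u v : V} (h : T.Anc u v) :
    ∃ p, IsWalk G u v p ∧ ∀ y ∈ p, T.Anc u y ∧ T.Anc y v := by
  obtain ⟨n, hn⟩ := h
  induction n generalizing v with
  | zero =>
    subst hn
    exact ⟨[v], ⟨List.isChain_singleton v, rfl, rfl⟩,
      fun y hy => by simp at hy; subst hy; exact ⟨anc_refl T y, anc_refl T y⟩⟩
  | succ n ih =>
    by_cases hv : v = s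
    · rw [hv, iterate_root T] at hn
      have huv : u = v := by rw [hv, ← hn]
      subst huv
      exact ⟨[u], ⟨List.isChain_singleton u, rfl, rfl⟩,
        fun y hy => by simp at hy; subst hy; exact ⟨anc_refl T y, anc_refl T y⟩⟩
    · rw [Function.iterate_succ_apply] at hn
      obtain ⟨q, ⟨hc, hh, hl⟩, hmem⟩ := ih hn
      refine ⟨q ++ [v], ⟨?_, ?_, ?_⟩, ?_⟩
      · refine List.IsChain.append hc (List.isChain_singleton v) ?_
        intro a ha b hb
        rw [hl] at ha
        simp at ha hb
        rw [← ha, ← hb]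
        exact T.parent_edge v hv
      · have hq : q ≠ [] := by rintro rfl; simp at hh
        rw [List.head?_append_of_ne_nil _ hq]; exact hh
      · simp
      · intro y hy
        rcases List.mem_append.1 hy with h1 | h1
        · obtain ⟨ha, hb⟩ := hmem y h1
          exact ⟨ha, anc_trans T hb (parent_step T v)⟩
        · simp at h1; subst h1
          exact ⟨⟨n + 1, hn⟩, anc_refl T y⟩

lemma walk_append {a b c : V} {p q : List V} (hp : IsWalk G a b p)
    (hq : IsWalk G b c q) : IsWalk G a c (p ++ q.tail) := by
  obtain ⟨hpc, hph, hpl⟩ := hp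
  obtain ⟨hqc, hqh, hql⟩ := hq
  obtain ⟨t, rfl⟩ : ∃ t, q = b :: t := by
    cases q with
    | nil => simp at hqh
    | cons x t => simp at hqh; subst hqh; exact ⟨t, rfl⟩
  have hpnil : p ≠ [] := by rintro rfl; simp at hph
  refine ⟨?_, ?_, ?_⟩
  · refine List.IsChain.append hpc (List.IsChain.tail hqc) ?_
    intro u hu v hv
    rw [hpl] at hu
    simp at hu
    subst hu
    cases t with
    | nil => simp at hv
    | cons y t' =>
      simp at hv
      subst hv
      exact (List.isChain_cons_cons.1 hqc).1
  · rw [List.head?_append_of_ne_nil _ hpnil]; exact hph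
  · cases t with
    | nil =>
      have hbc : b = c := by simpa using hql
      simp only [List.tail_cons, List.append_nil, hpl, hbc]
    | cons y t' =>
      rw [List.getLast?_append_of_ne_nil _ (by simp : (b :: y :: t').tail ≠ [])]
      simpa using hql

lemma dom_anc {u v : V} (h : Dom G s u v) : T.Anc u v := by
  obtain ⟨p, hw, hmem⟩ := anc_walk T ⟨(T.root_reach v).choose, (T.root_reach v).choose_spec⟩
  exact (hmem u (h p hw)).2

end Aux

/-- If `x ≠ s` and `h(x)` is not a sibling of `x` in the dominator tree `D`, then no
vertex on the path of `H` from `s` to `h(x)` is a sibling of `x` in `D`. -/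
theorem stmt18 (G : V → V → Prop) (s : V) (hflow : ∀ v, Reach G s v)
    (T : DFSTree G s) (hp : V → V) (hlp : IsLoopParent G s T.Anc hp)
    (x : V) (hx : x ≠ s) (hns : ¬ SiblingInD G s (hp x) x)
    (z : V) (hz : HAnc hp z (hp x)) :
    ¬ SiblingInD G s z x := by
  rintro ⟨hzx, w, hwz, hwx⟩
  obtain ⟨hps, hlp2⟩ := hlp
  obtain ⟨htanc, hne, ⟨-, q, hqw, hqmem⟩, hmax⟩ := hlp2 x hx
  -- `z` is a tree ancestor of `hp x`
  have hzh : T.Anc z (hp x) := by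
    obtain ⟨n, hn⟩ := hz
    clear hzx hwz
    subst hn
    induction n with
    | zero => exact anc_refl T _
    | succ n ih =>
      rw [Function.iterate_succ_apply']
      refine anc_trans T ?_ ih
      set y := hp^[n] (hp x) with hy
      by_cases hys : y = s
      · rw [hys, hps]; exact anc_refl T s
      · exact (hlp2 y hys).1
  have hwzanc : T.Anc w z := dom_anc T hwz.2.1
  have hpw : T.pre w < T.pre (hp x) :=
    lt_of_lt_of_le (anc_pre_strict T hwzanc hwz.1) (anc_pre T hzh)
  have hwne : w ≠ hp x := fun e => absurd (e ▸ hpw) (lt_irrefl _)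
  apply hns
  refine ⟨hne, w, ⟨hwne, ?_, ?_⟩, hwx⟩
  · -- w dominates hp x
    intro p hpwalk
    obtain ⟨q0, hq0w, hq0mem⟩ := anc_walk T htanc
    have hr : IsWalk G s x (p ++ q0.tail) := walk_append hpwalk hq0w
    rcases List.mem_append.1 (hwx.2.1 _ hr) with h1 | h1
    · exact h1
    · exfalso
      have := anc_pre T (hq0mem w (List.mem_of_mem_tail h1)).1
      exact absurd hpw (not_lt.2 this)
  · -- every proper dominator of hp x dominates w
    intro u hu hud
    have huanc : T.Anc u (hp x) := dom_anc T hud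
    have hpu : T.pre u < T.pre (hp x) := anc_pre_strict T huanc hu
    have hux : Dom G s u x := by
      intro p hpwalk
      by_contra hup
      have hr : IsWalk G s (hp x) (p ++ q.tail) := walk_append hpwalk hqw
      rcases List.mem_append.1 (hud _ hr) with h1 | h1
      · exact hup h1
      · have := anc_pre T (hqmem u (List.mem_of_mem_tail h1))
        exact absurd hpu (not_lt.2 this)
    have hunex : u ≠ x := by
      have : T.pre u < T.pre x :=
        lt_trans hpu (anc_pre_strict T htanc hne)
      exact fun e => absurd (e ▸ this) (lt_irrefl _)
    exact hwx.2.2 u hunex hux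

end StrongConn
end
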